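/- Let k be a commutative ring and A, B two non-degenerate idempotent k-algebras that are projective as k-modules. Then the k-algebra A ⊗_k B, with multiplication (a⊗b)(a'⊗b') = aa'⊗bb', is again non-degenerate, idempotent, and projective as a k-module. -/

import Mathlib

open TensorProduct

lemma key_lTensor {k : Type*} [CommRing k] {P B ι : Type*}
    [AddCommGroup P] [Module k P] [Module.Projective k P]
    [AddCommGroup B] [Module k B]
    (G : ι → B →ₗ[k] B) (hG : ∀ y : B, (∀ i, G i y = 0) → y = 0)
    (z : P ⊗[k] B) (hz : ∀ i, LinearMap.lTensor P (G i) z = 0) : z = 0 := by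
  classical
  obtain ⟨s, hs⟩ := Module.projective_def'.mp (inferInstance : Module.Projective k P)
  set e : P ⊗[k] B →ₗ[k] (P →₀ B) :=
    (TensorProduct.finsuppScalarLeft k B P).toLinearMap ∘ₗ LinearMap.rTensor B s with he
  have hcomm : ∀ (g : B →ₗ[k] B) (w : P ⊗[k] B) (j : P),
      e (LinearMap.lTensor P g w) j = g (e w j) := by
    intro g w j
    induction w using TensorProduct.induction_on with
    | zero => simp
    | tmul p b =>
        simp [he, TensorProduct.finsuppScalarLeft_apply_tmul_apply]
    | add u v hu hv => simp [map_add, hu, hv]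
  have hez : e z = 0 := by
    ext j
    refine hG _ fun i => ?_
    rw [← hcomm (G i) z j, hz i]
    simp
  have hinj : Function.Injective e := by
    have hlin : (LinearMap.rTensor B (Finsupp.linearCombination k (_root_.id : P → P))) ∘ₗ
        (LinearMap.rTensor B s) = LinearMap.id := by
      rw [← LinearMap.rTensor_comp, hs, LinearMap.rTensor_id]
    have h1 : Function.Injective (LinearMap.rTensor B s) := by
      intro x y hxy
      have h2 := congrArg (LinearMap.rTensor B
        (Finsupp.linearCombination k (_root_.id : P → P))) hxy
      have hx := LinearMap.congr_fun hlin x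
      have hy := LinearMap.congr_fun hlin y
      simp only [LinearMap.comp_apply, LinearMap.id_apply] at hx hy
      rw [hx, hy] at h2
      exact h2
    exact (TensorProduct.finsuppScalarLeft k B P).injective.comp h1
  exact hinj (by simpa using hez)

lemma key_rTensor {k : Type*} [CommRing k] {A P ι : Type*}
    [AddCommGroup P] [Module k P] [Module.Projective k P]
    [AddCommGroup A] [Module k A]
    (F : ι → A →ₗ[k] A) (hF : ∀ y : A, (∀ i, F i y = 0) → y = 0)
    (z : A ⊗[k] P) (hz : ∀ i, LinearMap.rTensor P (F i) z = 0) : z = 0 := by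
  have hc : ∀ (f : A →ₗ[k] A) (w : A ⊗[k] P),
      TensorProduct.comm k A P (LinearMap.rTensor P f w)
        = LinearMap.lTensor P f (TensorProduct.comm k A P w) := by
    intro f w
    induction w using TensorProduct.induction_on with
    | zero => simp
    | tmul a p => simp
    | add u v hu hv => simp [map_add, hu, hv]
  have : TensorProduct.comm k A P z = 0 := by
    refine key_lTensor F hF _ fun i => ?_
    rw [← hc, hz i, map_zero]
  simpa using congrArg (TensorProduct.comm k A P).symm this


/-- The tensor product of two non-degenerate idempotent k-projective
(non-unital) k-algebras, with factorwise multiplication `(a⊗b)(a'⊗b') = aa'⊗bb'`, is again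
a non-degenerate idempotent k-algebra which is projective as a k-module. -/
theorem stmt_11 (k : Type*) [CommRing k]
    (A : Type*) [NonUnitalRing A] [Module k A] [SMulCommClass k A A] [IsScalarTower k A A]
    (B : Type*) [NonUnitalRing B] [Module k B] [SMulCommClass k B B] [IsScalarTower k B B]
    [Module.Projective k A] [Module.Projective k B]
    (hAnd₁ : ∀ a : A, (∀ b : A, a * b = 0) → a = 0)
    (hAnd₂ : ∀ a : A, (∀ b : A, b * a = 0) → a = 0)
    (hAid : ∀ a : A, a ∈ AddSubmonoid.closure {x : A | ∃ b c : A, x = b * c})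
    (hBnd₁ : ∀ a : B, (∀ b : B, a * b = 0) → a = 0)
    (hBnd₂ : ∀ a : B, (∀ b : B, b * a = 0) → a = 0)
    (hBid : ∀ a : B, a ∈ AddSubmonoid.closure {x : B | ∃ b c : B, x = b * c}) :
    ∀ mulAB : A ⊗[k] B →ₗ[k] A ⊗[k] B →ₗ[k] A ⊗[k] B,
      mulAB = TensorProduct.map₂ (LinearMap.mul k A) (LinearMap.mul k B) →
      -- factorwise multiplication
      (∀ (a a' : A) (b b' : B),
        mulAB (a ⊗ₜ[k] b) (a' ⊗ₜ[k] b') = (a * a') ⊗ₜ[k] (b * b')) ∧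
      -- associativity (so that `A ⊗ B` is a k-algebra)
      (∀ x y z : A ⊗[k] B, mulAB (mulAB x y) z = mulAB x (mulAB y z)) ∧
      -- idempotent
      (∀ x : A ⊗[k] B,
        x ∈ AddSubmonoid.closure {y : A ⊗[k] B | ∃ u v : A ⊗[k] B, y = mulAB u v}) ∧
      -- non-degenerate
      (∀ x : A ⊗[k] B, (∀ y : A ⊗[k] B, mulAB x y = 0) → x = 0) ∧
      (∀ x : A ⊗[k] B, (∀ y : A ⊗[k] B, mulAB y x = 0) → x = 0) ∧
      -- k-projective
      Module.Projective k (A ⊗[k] B) := by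
  intro mulAB hmul
  subst hmul
  set mulAB := TensorProduct.map₂ (LinearMap.mul k A) (LinearMap.mul k B) with hmul
  have htmul : ∀ (a a' : A) (b b' : B),
      mulAB (a ⊗ₜ[k] b) (a' ⊗ₜ[k] b') = (a * a') ⊗ₜ[k] (b * b') := by
    intro a a' b b'
    simp [hmul, TensorProduct.map₂_apply_tmul, TensorProduct.map_tmul]
  -- right multiplication by pure tensor as a `map`
  have hR : ∀ (x : A ⊗[k] B) (a' : A) (b' : B),
      mulAB x (a' ⊗ₜ[k] b')
        = TensorProduct.map (LinearMap.mulRight k a') (LinearMap.mulRight k b') x := by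
    intro x a' b'
    induction x using TensorProduct.induction_on with
    | zero => simp
    | tmul a b => simp [htmul]
    | add u v hu hv => simp [map_add, hu, hv]
  -- left multiplication by pure tensor as a `map`
  have hL : ∀ (x : A ⊗[k] B) (a' : A) (b' : B),
      mulAB (a' ⊗ₜ[k] b') x
        = TensorProduct.map (LinearMap.mulLeft k a') (LinearMap.mulLeft k b') x := by
    intro x a' b'
    induction x using TensorProduct.induction_on with
    | zero => simp
    | tmul a b => simp [htmul]
    | add u v hu hv => simp [map_add, hu, hv]
  refine ⟨htmul, ?_, ?_, ?_, ?_, ?_⟩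
  · -- associativity
    intro x y z
    induction x using TensorProduct.induction_on with
    | zero => simp
    | add u v hu hv => simp [map_add, hu, hv]
    | tmul a b =>
      induction y using TensorProduct.induction_on with
      | zero => simp
      | add u v hu hv => simp [map_add, hu, hv]
      | tmul a' b' =>
        induction z using TensorProduct.induction_on with
        | zero => simp
        | add u v hu hv => simp [map_add, hu, hv]
        | tmul a'' b'' => simp [htmul, mul_assoc]
  · -- idempotent
    intro x
    set T := AddSubmonoid.closure {y : A ⊗[k] B | ∃ u v : A ⊗[k] B, y = mulAB u v} with hT
    have hpure : ∀ (a : A) (b : B), a ⊗ₜ[k] b ∈ T := by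
      intro a b
      refine AddSubmonoid.closure_induction (motive := fun a _ => ∀ b : B, a ⊗ₜ[k] b ∈ T)
        ?_ ?_ ?_ (hAid a) b
      · rintro x ⟨c, d, rfl⟩ b
        refine AddSubmonoid.closure_induction (motive := fun b _ => (c * d) ⊗ₜ[k] b ∈ T)
          ?_ ?_ ?_ (hBid b)
        · rintro y ⟨e, f, rfl⟩
          exact AddSubmonoid.subset_closure ⟨c ⊗ₜ[k] e, d ⊗ₜ[k] f, by rw [htmul]⟩
        · simpa using (zero_mem T)
        · intro y y' _ _ hy hy'
          simpa [TensorProduct.tmul_add] using add_mem hy hy'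
      · intro b; simpa using (zero_mem T)
      · intro a a' _ _ ha ha' b
        simpa [TensorProduct.add_tmul] using add_mem (ha b) (ha' b)
    induction x using TensorProduct.induction_on with
    | zero => exact zero_mem T
    | tmul a b => exact hpure a b
    | add u v hu hv => exact add_mem hu hv
  · -- non-degenerate (left factor kills)
    intro x hx
    refine key_rTensor (P := B) (fun a' : A => LinearMap.mulRight k a')
      (fun y hy => hAnd₁ y fun b => hy b) x fun a' => ?_
    refine key_lTensor (P := A) (fun b' : B => LinearMap.mulRight k b')
      (fun y hy => hBnd₁ y fun b => hy b) _ fun b' => ?_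
    have h := hx (a' ⊗ₜ[k] b')
    rw [hR x a' b'] at h
    have : TensorProduct.map (LinearMap.mulRight k a') (LinearMap.mulRight k b') x
        = LinearMap.lTensor A (LinearMap.mulRight k b')
          (LinearMap.rTensor B (LinearMap.mulRight k a') x) := by
      rw [← LinearMap.comp_apply, LinearMap.lTensor_comp_rTensor]
    rw [this] at h
    exact h
  · intro x hx
    refine key_rTensor (P := B) (fun a' : A => LinearMap.mulLeft k a')
      (fun y hy => hAnd₂ y fun b => hy b) x fun a' => ?_
    refine key_lTensor (P := A) (fun b' : B => LinearMap.mulLeft k b')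
      (fun y hy => hBnd₂ y fun b => hy b) _ fun b' => ?_
    have h := hx (a' ⊗ₜ[k] b')
    rw [hL x a' b'] at h
    have : TensorProduct.map (LinearMap.mulLeft k a') (LinearMap.mulLeft k b') x
        = LinearMap.lTensor A (LinearMap.mulLeft k b')
          (LinearMap.rTensor B (LinearMap.mulLeft k a') x) := by
      rw [← LinearMap.comp_apply, LinearMap.lTensor_comp_rTensor]
    rw [this] at h
    exact h
  · infer_instance
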